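/- The Konno function f is a probability density on ℝ: f(x) ≥ 0 for all x ∈ ℝ, and ∫_ℝ f(x) dx = ∫_{−1/√2}^{1/√2} 1/(π(1−x²)√(1−2x²)) dx = 1. -/

import Mathlib

open Real MeasureTheory Set Filter Topology

noncomputable section

/-- The Konno density: `f(x) = 1/(π(1−x²)√(1−2x²))` for `|x| < 1/√2`, and `0` otherwise. -/
def konno (x : ℝ) : ℝ :=
  if |x| < 1 / Real.sqrt 2 then 1 / (Real.pi * (1 - x ^ 2) * Real.sqrt (1 - 2 * x ^ 2)) else 0

lemma abs_lt_invsqrt2 (x : ℝ) : |x| < 1 / Real.sqrt 2 ↔ 2 * x ^ 2 < 1 := by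
  have h2 : (0:ℝ) < Real.sqrt 2 := Real.sqrt_pos.mpr (by norm_num)
  have hs : Real.sqrt 2 ^ 2 = 2 := Real.sq_sqrt (by norm_num)
  rw [lt_div_iff₀ h2]
  constructor <;> intro h <;> nlinarith [abs_nonneg x, sq_abs x]

lemma invsqrt2_pos : (0:ℝ) < 1 / Real.sqrt 2 :=
  div_pos one_pos (Real.sqrt_pos.mpr (by norm_num))

lemma invsqrt2_sq : (1 / Real.sqrt 2) ^ 2 = 1 / 2 := by
  rw [div_pow, one_pow, Real.sq_sqrt] <;> norm_num

-- sequence of cut points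
def kb (n : ℕ) : ℝ := (1 / Real.sqrt 2) * (1 - 1 / (n + 1))

lemma kb_nonneg (n : ℕ) : 0 ≤ kb n := by
  have h1 : (0:ℝ) < (n:ℝ) + 1 := by positivity
  have : (1:ℝ) / (n + 1) ≤ 1 := by rw [div_le_one h1]; linarith
  have := invsqrt2_pos
  unfold kb; nlinarith

lemma kb_lt (n : ℕ) : kb n < 1 / Real.sqrt 2 := by
  have h1 : (0:ℝ) < (n:ℝ) + 1 := by positivity
  have : (0:ℝ) < 1 / (n + 1) := by positivity
  have := invsqrt2_pos
  unfold kb; nlinarith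

lemma kb_sq (n : ℕ) : 2 * kb n ^ 2 < 1 := by
  have := (abs_lt_invsqrt2 (kb n)).mp (by rw [abs_of_nonneg (kb_nonneg n)]; exact kb_lt n)
  exact this

lemma kb_tendsto : Tendsto kb atTop (𝓝 (1 / Real.sqrt 2)) := by
  have h := tendsto_one_div_add_atTop_nhds_zero_nat (𝕜 := ℝ)
  have : Tendsto (fun n : ℕ => (1 / Real.sqrt 2) * (1 - 1 / (n + 1))) atTop
      (𝓝 ((1 / Real.sqrt 2) * (1 - 0))) :=
    (tendsto_const_nhds.sub h).const_mul _
  simp only [sub_zero, mul_one] at this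
  exact this

lemma konno_nonneg (x : ℝ) : 0 ≤ konno x := by
  unfold konno
  split
  · rename_i h
    rw [abs_lt_invsqrt2] at h
    have h1 : (0:ℝ) ≤ 1 - x ^ 2 := by nlinarith
    positivity
  · exact le_refl 0

lemma konno_eq {x : ℝ} (hx : 2 * x ^ 2 < 1) :
    konno x = 1 / (Real.pi * (1 - x ^ 2) * Real.sqrt (1 - 2 * x ^ 2)) :=
  if_pos ((abs_lt_invsqrt2 x).mpr hx)

lemma konno_hasDeriv (x : ℝ) (hx : 2 * x ^ 2 < 1) :
    HasDerivAt (fun y : ℝ => π⁻¹ * Real.arctan (y / Real.sqrt (1 - 2 * y ^ 2)))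
      (konno x) x := by
  have h0 : (0:ℝ) < 1 - 2 * x ^ 2 := by linarith
  set s := Real.sqrt (1 - 2 * x ^ 2) with hs_def
  have hs0 : 0 < s := Real.sqrt_pos.mpr h0
  have hs2 : s ^ 2 = 1 - 2 * x ^ 2 := Real.sq_sqrt h0.le
  have hx2 : 0 < 1 - x ^ 2 := by nlinarith
  have h1 : HasDerivAt (fun y : ℝ => 1 - 2 * y ^ 2) (-(2 * (2 * x ^ 1))) x :=
    ((hasDerivAt_pow 2 x).const_mul 2).const_sub 1
  have h2 : HasDerivAt (fun y : ℝ => Real.sqrt (1 - 2 * y ^ 2))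
      (-(2 * (2 * x ^ 1)) / (2 * s)) x := h1.sqrt h0.ne'
  have h3 : HasDerivAt (fun y : ℝ => y / Real.sqrt (1 - 2 * y ^ 2))
      ((1 * s - x * (-(2 * (2 * x ^ 1)) / (2 * s))) / s ^ 2) x :=
    (hasDerivAt_id x).div h2 hs0.ne'
  have h5 := ((Real.hasDerivAt_arctan (x / s)).comp x h3).const_mul (π⁻¹)
  refine h5.congr_deriv ?_
  symm
  rw [konno_eq hx, ← hs_def]
  have hpi : (0:ℝ) < π := Real.pi_pos
  field_simp
  ring_nf
  linear_combination x ^ 2 * hs2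

lemma konno_continuousOn {b : ℝ} (hb0 : 0 ≤ b) (hb : 2 * b ^ 2 < 1) :
    ContinuousOn konno (Set.uIcc (-b) b) := by
  have huIcc : Set.uIcc (-b) b = Set.Icc (-b) b := uIcc_of_le (by linarith)
  rw [huIcc]
  have key : ∀ x ∈ Set.Icc (-b) b, 2 * x ^ 2 < 1 := by
    intro x hx
    have h1 : x ^ 2 ≤ b ^ 2 := by nlinarith [hx.1, hx.2]
    linarith
  have hg : ContinuousOn (fun x : ℝ => 1 / (Real.pi * (1 - x ^ 2) * Real.sqrt (1 - 2 * x ^ 2)))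
      (Set.Icc (-b) b) := by
    apply ContinuousOn.div continuousOn_const
    · fun_prop
    · intro x hx
      have hx2 := key x hx
      have h0 : (0:ℝ) < 1 - 2 * x ^ 2 := by linarith
      have hx1 : (0:ℝ) < 1 - x ^ 2 := by nlinarith
      have := Real.sqrt_pos.mpr h0
      positivity
  exact hg.congr fun x hx => konno_eq (key x hx)

lemma konno_int_Ioo {b : ℝ} (hb0 : 0 ≤ b) (hb : 2 * b ^ 2 < 1) :
    ∫ x in Set.Ioo (-b) b, konno x
      = 2 * (π⁻¹ * Real.arctan (b / Real.sqrt (1 - 2 * b ^ 2))) := by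
  have key : ∀ x ∈ Set.uIcc (-b) b, 2 * x ^ 2 < 1 := by
    intro x hx
    rw [uIcc_of_le (by linarith)] at hx
    nlinarith [hx.1, hx.2]
  have hFTC := intervalIntegral.integral_eq_sub_of_hasDerivAt
    (f := fun y : ℝ => π⁻¹ * Real.arctan (y / Real.sqrt (1 - 2 * y ^ 2)))
    (f' := konno) (a := -b) (b := b)
    (fun x hx => konno_hasDeriv x (key x hx))
    ((konno_continuousOn hb0 hb).intervalIntegrable)
  rw [intervalIntegral.integral_of_le (by linarith : -b ≤ b),
    MeasureTheory.integral_Ioc_eq_integral_Ioo] at hFTC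
  rw [hFTC]
  simp only [neg_sq, neg_div, Real.arctan_neg]
  ring

lemma konno_integral_Ioo_eq_one :
    ∫ x in Set.Ioo (-(1 / Real.sqrt 2)) (1 / Real.sqrt 2), konno x = 1 := by
  set c : ℝ := 1 / Real.sqrt 2 with hc
  have hcov : AECover (volume.restrict (Set.Ioo (-c) c)) atTop
      (fun n : ℕ => Set.Ioo (-(kb n)) (kb n)) :=
    aecover_Ioo_of_Ioo (kb_tendsto.neg) kb_tendsto
  have hsub : ∀ n, Set.Ioo (-(kb n)) (kb n) ⊆ Set.Ioo (-c) c := fun n =>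
    Set.Ioo_subset_Ioo (by have := kb_lt n; linarith) (kb_lt n).le
  have hres : ∀ n : ℕ, (volume.restrict (Set.Ioo (-c) c)).restrict (Set.Ioo (-(kb n)) (kb n))
      = volume.restrict (Set.Ioo (-(kb n)) (kb n)) := by
    intro n
    rw [Measure.restrict_restrict measurableSet_Ioo, Set.inter_eq_left.mpr (hsub n)]
  have hint : ∀ n : ℕ, IntegrableOn konno (Set.Ioo (-(kb n)) (kb n))
      (volume.restrict (Set.Ioo (-c) c)) := by
    intro n
    rw [IntegrableOn, hres n]
    have hc2 : ContinuousOn konno (Set.Icc (-(kb n)) (kb n)) := by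
      have := konno_continuousOn (kb_nonneg n) (kb_sq n)
      rwa [uIcc_of_le (by have := kb_nonneg n; linarith)] at this
    exact hc2.integrableOn_Icc.mono_set Set.Ioo_subset_Icc_self
  -- the limit of the truncated integrals
  have harc : Tendsto (fun n : ℕ => kb n / Real.sqrt (1 - 2 * kb n ^ 2)) atTop atTop := by
    have hsq : Tendsto (fun n : ℕ => Real.sqrt (1 - 2 * kb n ^ 2)) atTop (𝓝[>] 0) := by
      rw [tendsto_nhdsWithin_iff]
      constructor
      · have h1 : Tendsto (fun n : ℕ => 1 - 2 * kb n ^ 2) atTop (𝓝 (1 - 2 * c ^ 2)) :=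
          (tendsto_const_nhds.sub ((kb_tendsto.pow 2).const_mul 2))
        have h2 : (1:ℝ) - 2 * c ^ 2 = 0 := by rw [hc, invsqrt2_sq]; norm_num
        rw [h2] at h1
        have := (Real.continuous_sqrt.tendsto 0).comp h1
        simpa [Function.comp_def] using this
      · exact Eventually.of_forall fun n => Real.sqrt_pos.mpr (by have := kb_sq n; linarith)
    have hinv : Tendsto (fun n : ℕ => (Real.sqrt (1 - 2 * kb n ^ 2))⁻¹) atTop atTop :=
      tendsto_inv_nhdsGT_zero.comp hsq
    have := Tendsto.pos_mul_atTop invsqrt2_pos kb_tendsto hinv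
    simpa [div_eq_mul_inv] using this
  have htend : Tendsto
      (fun n : ℕ => ∫ x in Set.Ioo (-(kb n)) (kb n), konno x ∂(volume.restrict (Set.Ioo (-c) c)))
      atTop (𝓝 1) := by
    have heq : ∀ n : ℕ,
        (∫ x in Set.Ioo (-(kb n)) (kb n), konno x ∂(volume.restrict (Set.Ioo (-c) c)))
        = 2 * (π⁻¹ * Real.arctan (kb n / Real.sqrt (1 - 2 * kb n ^ 2))) := by
      intro n
      rw [show (∫ x in Set.Ioo (-(kb n)) (kb n), konno x ∂(volume.restrict (Set.Ioo (-c) c)))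
          = ∫ x, konno x ∂((volume.restrict (Set.Ioo (-c) c)).restrict (Set.Ioo (-(kb n)) (kb n)))
          from rfl, hres n]
      exact konno_int_Ioo (kb_nonneg n) (kb_sq n)
    simp only [heq]
    have harctan : Tendsto (fun n : ℕ => Real.arctan (kb n / Real.sqrt (1 - 2 * kb n ^ 2)))
        atTop (𝓝 (π / 2)) :=
      (Real.tendsto_arctan_atTop.mono_right nhdsWithin_le_nhds).comp harc
    have := (harctan.const_mul (π⁻¹)).const_mul (2:ℝ)
    have hval : 2 * (π⁻¹ * (π / 2)) = 1 := by
      field_simp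
    rwa [hval] at this
  exact hcov.integral_eq_of_tendsto_of_nonneg_ae 1
    (ae_of_all _ konno_nonneg) hint htend

lemma konno_integral_eq_Ioo :
    (∫ x : ℝ, konno x) = ∫ x in Set.Ioo (-(1 / Real.sqrt 2)) (1 / Real.sqrt 2), konno x := by
  refine (setIntegral_eq_integral_of_forall_compl_eq_zero fun x hx => ?_).symm
  have : ¬ |x| < 1 / Real.sqrt 2 := by
    intro h
    exact hx (abs_lt.mp h |> fun h' => ⟨h'.1, h'.2⟩)
  exact if_neg this


/-- **The Konno function is a probability density on ℝ**: it is nonnegative, its integral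
over `ℝ` equals `∫_{−1/√2}^{1/√2} 1/(π(1−x²)√(1−2x²)) dx`, and this common value is `1`. -/
theorem konno_probability_density :
    (∀ x : ℝ, 0 ≤ konno x) ∧
    (∫ x : ℝ, konno x) =
      (∫ x in (-(1 / Real.sqrt 2))..(1 / Real.sqrt 2),
        1 / (Real.pi * (1 - x ^ 2) * Real.sqrt (1 - 2 * x ^ 2))) ∧
    (∫ x : ℝ, konno x) = 1 := by
  refine ⟨konno_nonneg, ?_, ?_⟩
  · rw [konno_integral_eq_Ioo,
      intervalIntegral.integral_of_le (by have := invsqrt2_pos; linarith :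
        -(1 / Real.sqrt 2) ≤ 1 / Real.sqrt 2),
      MeasureTheory.integral_Ioc_eq_integral_Ioo]
    refine setIntegral_congr_fun measurableSet_Ioo fun x hx => ?_
    exact konno_eq ((abs_lt_invsqrt2 x).mp (abs_lt.mpr ⟨hx.1, hx.2⟩))
  · rw [konno_integral_eq_Ioo]
    exact konno_integral_Ioo_eq_one

end
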